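/- Let W ⊆ (ℝmax^n)^2 be either a closed congruence or a closed polar cone. Then for all f, g ∈ ℝmax^n with (f,g) ∈ W and every h ∈ ℝmax^n, one has g∖h̄ ≤ f∖h̄. -/

import Mathlib

open scoped Classical

noncomputable section

/-- The max-plus semiring `ℝmax = ℝ ∪ {-∞}`. Its `Add` is the max-plus
"multiplication" `a ⊗ b = a + b` (with `-∞` absorbing), its `max` is the
max-plus "addition". -/
abbrev Rmax := WithBot ℝ

/-- The order topology on `WithBot ℝ` (the topology of the metric
`d(a,b) = |exp a - exp b|`). -/
instance : TopologicalSpace Rmax := Preorder.topology Rmax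
instance : OrderTopology Rmax := ⟨rfl⟩

/-- Vectors of the max-plus semimodule `ℝmax^n`. -/
abbrev RmaxVec (n : ℕ) := Fin n → Rmax

/-- The max-plus linear combination `xλ ⊕ yμ`. -/
def maxComb {n : ℕ} (x y : RmaxVec n) (lam mu : Rmax) : RmaxVec n :=
  fun i => max (x i + lam) (y i + mu)

/-- `V ⊆ ℝmax^n` is a (max-plus) subsemimodule. -/
def IsSubsemimodule {n : ℕ} (V : Set (RmaxVec n)) : Prop :=
  ∀ x ∈ V, ∀ y ∈ V, ∀ lam mu : Rmax, maxComb x y lam mu ∈ V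

/-- `W ⊆ (ℝmax^n)² ≅ ℝmax^{2n}` is a (max-plus) subsemimodule,
with the entrywise operations. -/
def IsSubsemimodulePair {n : ℕ} (W : Set (RmaxVec n × RmaxVec n)) : Prop :=
  ∀ p ∈ W, ∀ q ∈ W, ∀ lam mu : Rmax,
    (maxComb p.1 q.1 lam mu, maxComb p.2 q.2 lam mu) ∈ W

/-- A pre-congruence: a subsemimodule of `(ℝmax^n)²` containing the diagonal
and transitive. -/
def IsPrecongruence {n : ℕ} (W : Set (RmaxVec n × RmaxVec n)) : Prop :=
  IsSubsemimodulePair W ∧ (∀ f : RmaxVec n, (f, f) ∈ W) ∧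
    ∀ f g h : RmaxVec n, (f, g) ∈ W → (g, h) ∈ W → (f, h) ∈ W

/-- A polar cone: a pre-congruence such that `f ≤ g` implies `(f,g) ∈ W`. -/
def IsPolarCone {n : ℕ} (W : Set (RmaxVec n × RmaxVec n)) : Prop :=
  IsPrecongruence W ∧ ∀ f g : RmaxVec n, f ≤ g → (f, g) ∈ W

/-- A congruence: a symmetric pre-congruence. -/
def IsCongruence {n : ℕ} (W : Set (RmaxVec n × RmaxVec n)) : Prop :=
  IsPrecongruence W ∧ ∀ f g : RmaxVec n, (f, g) ∈ W → (g, f) ∈ W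

/-- The max-plus bracket `⟨y, x⟩ = max_i (y_i + x_i)`. -/
def mpBracket {n : ℕ} (y x : RmaxVec n) : Rmax :=
  Finset.univ.sup fun i => y i + x i

/-- The polar `V°` of `V ⊆ ℝmax^n`. -/
def mpPolar {n : ℕ} (V : Set (RmaxVec n)) : Set (RmaxVec n × RmaxVec n) :=
  { p | ∀ x ∈ V, mpBracket p.1 x ≤ mpBracket p.2 x }

/-- The orthogonal `V⊥` of `V ⊆ ℝmax^n`. -/
def mpOrtho {n : ℕ} (V : Set (RmaxVec n)) : Set (RmaxVec n × RmaxVec n) :=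
  { p | ∀ x ∈ V, mpBracket p.1 x = mpBracket p.2 x }

/-- The dual polar `W⋄` of `W ⊆ (ℝmax^n)²`. -/
def mpDiamond {n : ℕ} (W : Set (RmaxVec n × RmaxVec n)) : Set (RmaxVec n) :=
  { x | ∀ p ∈ W, mpBracket p.1 x ≤ mpBracket p.2 x }

/-- The dual orthogonal `W⊤` of `W ⊆ (ℝmax^n)²`. -/
def mpTop {n : ℕ} (W : Set (RmaxVec n × RmaxVec n)) : Set (RmaxVec n) :=
  { x | ∀ p ∈ W, mpBracket p.1 x = mpBracket p.2 x }

/-- The canonical embedding of `ℝmax = ℝ ∪ {-∞}` into `EReal = ℝ ∪ {±∞}`. -/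
def toE : Rmax → EReal := WithBot.recBotCoe ⊥ (fun x => (x : EReal))

/-- The entrywise supremum `ḡ ∈ EReal^n` of `{ f | (f,g) ∈ W }`,
computed in `EReal`. -/
def ebar {n : ℕ} (W : Set (RmaxVec n × RmaxVec n)) (g : RmaxVec n) :
    Fin n → EReal :=
  fun i => sSup { a : EReal | ∃ f : RmaxVec n, (f, g) ∈ W ∧ a = toE (f i) }

/-- The residuation `u∖x = sSup { λ | ∀ i, u_i + λ ≤ x_i }` in `EReal`. -/
def eres {n : ℕ} (u x : Fin n → EReal) : EReal :=
  sSup { lam : EReal | ∀ i, u i + lam ≤ x i }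

/-- `z^β`: the vector in `ℝmax^n` obtained from `z ∈ EReal^n` by replacing the
entries equal to `+∞` by `β` and keeping the other entries. -/
def cut {n : ℕ} (z : Fin n → EReal) (b : Rmax) : RmaxVec n :=
  fun i => if z i = ⊤ then b else if z i = ⊥ then ⊥ else ((z i).toReal : ℝ)


lemma eq_bot_or_exists_coe (x : Rmax) : x = ⊥ ∨ ∃ r : ℝ, x = (r : Rmax) := by
  induction x using WithBot.recBotCoe with
  | bot => exact Or.inl rfl
  | coe r => exact Or.inr ⟨r, rfl⟩

lemma toE_bot' : toE ⊥ = ⊥ := rfl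

lemma toE_coe' (r : ℝ) : toE (r : Rmax) = (r : EReal) := rfl

lemma toE_mono : Monotone toE := by
  intro a b hab
  induction a using WithBot.recBotCoe with
  | bot => exact bot_le
  | coe r =>
    induction b using WithBot.recBotCoe with
    | bot => exact absurd hab (by simp)
    | coe s =>
      show (r : EReal) ≤ (s : EReal)
      exact EReal.coe_le_coe_iff.mpr (WithBot.coe_le_coe.mp hab)

lemma toE_add_coe (x : Rmax) (c : ℝ) : toE (x + (c : Rmax)) = toE x + (c : EReal) := by
  induction x using WithBot.recBotCoe with
  | bot =>
    show toE (⊥ + _) = (⊥ : EReal) + _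
    rw [WithBot.bot_add, EReal.bot_add]
    rfl
  | coe r =>
    rw [← WithBot.coe_add]
    show ((r + c : ℝ) : EReal) = (r : EReal) + (c : EReal)
    exact EReal.coe_add r c

/-- Key lemma: for a pre-congruence `W`, if `(f,g) ∈ W` and the real scalar
`lam` satisfies `g·lam ≤ h̄`, then `f·lam ≤ h̄`. -/
lemma key_lemma {n : ℕ} {W : Set (RmaxVec n × RmaxVec n)}
    (hpre : IsPrecongruence W) {f g : RmaxVec n} (hfg : (f, g) ∈ W)
    (h : RmaxVec n) (lam : ℝ)
    (hlam : ∀ i, toE (g i) + (lam : EReal) ≤ ebar W h i) :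
    ∀ i, toE (f i) + (lam : EReal) ≤ ebar W h i := by
  obtain ⟨hsub, hdiag, htrans⟩ := hpre
  -- For every ε > 0, we find a witness giving `f i + lam - ε ≤ h̄ i`.
  have main : ∀ ε : ℝ, 0 < ε → ∀ i, toE (f i) + ((lam - ε : ℝ) : EReal) ≤ ebar W h i := by
    intro ε hε
    set c : ℝ := lam - ε with hc
    -- Find `v` with `(v,h) ∈ W` and `g j + c ≤ v j` for all `j`.
    have hv : ∀ s : Finset (Fin n), ∃ v : RmaxVec n, (v, h) ∈ W ∧
        ∀ j ∈ s, g j + (c : Rmax) ≤ v j := by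
      intro s
      induction s using Finset.induction_on with
      | empty => exact ⟨h, hdiag h, by simp⟩
      | @insert j s hj ih =>
        obtain ⟨v, hvW, hvs⟩ := ih
        -- find a witness for coordinate j
        have hwit : ∃ w : RmaxVec n, (w, h) ∈ W ∧ g j + (c : Rmax) ≤ w j := by
          rcases eq_bot_or_exists_coe (g j) with hgj | ⟨r, hgj⟩
          ·
            refine ⟨h, hdiag h, ?_⟩
            rw [hgj, WithBot.bot_add]; exact bot_le
          ·
            have h1 : ((r + c : ℝ) : EReal) < ebar W h j := by
              have h2 := hlam j
              rw [hgj] at h2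
              have h3 : ((r + lam : ℝ) : EReal) ≤ ebar W h j := by
                rw [EReal.coe_add]; exact h2
              refine lt_of_lt_of_le ?_ h3
              exact_mod_cast (by linarith : r + c < r + lam)
            rw [ebar] at h1
            obtain ⟨a, ⟨w, hwW, rfl⟩, ha⟩ := lt_sSup_iff.mp h1
            refine ⟨w, hwW, ?_⟩
            rw [hgj, ← WithBot.coe_add]
            rcases eq_bot_or_exists_coe (w j) with hwj | ⟨s, hwj⟩
            · exfalso; rw [hwj] at ha
              exact absurd ha (by exact not_lt.mpr bot_le)
            · rw [hwj, toE_coe'] at ha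
              have : (r + c : ℝ) < s := by exact_mod_cast ha
              rw [hwj]
              exact WithBot.coe_le_coe.mpr this.le
        obtain ⟨w, hwW, hwj⟩ := hwit
        refine ⟨maxComb v w 0 0, ?_, ?_⟩
        · have := hsub (v, h) hvW (w, h) hwW 0 0
          have hmax : maxComb h h (0 : Rmax) 0 = h := by
            funext i; simp [maxComb]
          rwa [hmax] at this
        · intro i hi
          rcases Finset.mem_insert.mp hi with rfl | hi
          · calc g i + (c : Rmax) ≤ w i := hwj
              _ ≤ max (v i + 0) (w i + 0) := by simp
          · calc g i + (c : Rmax) ≤ v i := hvs i hi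
              _ ≤ max (v i + 0) (w i + 0) := by simp
    obtain ⟨v, hvW, hvall⟩ := hv Finset.univ
    have hvall' : ∀ j, g j + (c : Rmax) ≤ v j := fun j => hvall j (Finset.mem_univ j)
    -- scale (f,g) by c
    have hscale : ((fun i => f i + (c : Rmax)), (fun i => g i + (c : Rmax))) ∈ W := by
      have := hsub (f, g) hfg (f, g) hfg (c : Rmax) (c : Rmax)
      have h1 : maxComb f f (c : Rmax) (c : Rmax) = fun i => f i + (c : Rmax) := by
        funext i; simp [maxComb]
      have h2 : maxComb g g (c : Rmax) (c : Rmax) = fun i => g i + (c : Rmax) := by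
        funext i; simp [maxComb]
      rwa [h1, h2] at this
    -- combine with diagonal (v,v)
    have hcomb := hsub _ hscale (v, v) (hdiag v) 0 0
    have h2nd : maxComb (fun i => g i + (c : Rmax)) v 0 0 = v := by
      funext i
      simp only [maxComb, add_zero]
      exact max_eq_right (hvall' i)
    rw [h2nd] at hcomb
    -- transitivity
    have hwh := htrans _ _ _ hcomb hvW
    intro i
    have hle : toE (f i) + ((c : ℝ) : EReal) ≤ toE (maxComb (fun i => f i + (c : Rmax)) v 0 0 i) := by
      rw [← toE_add_coe]
      apply toE_mono
      simp [maxComb]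
    refine le_trans hle ?_
    exact le_sSup ⟨_, hwh, rfl⟩
  -- take the limit ε → 0
  intro i
  rcases eq_bot_or_exists_coe (f i) with hfi | ⟨r, hfi⟩
  · rw [hfi]
    show toE ⊥ + _ ≤ _
    rw [toE_bot', EReal.bot_add]
    exact bot_le
  · rw [hfi]
    show (r : EReal) + (lam : EReal) ≤ _
    rw [← EReal.coe_add]
    by_contra hcon
    push_neg at hcon
    obtain ⟨z, hz1, hz2⟩ := EReal.exists_between_coe_real hcon
    have hzr : z < r + lam := by exact_mod_cast hz2
    have := main (r + lam - z) (by linarith) i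
    rw [hfi] at this
    have heq : toE ((r : ℝ) : Rmax) + ((lam - (r + lam - z) : ℝ) : EReal) = (z : EReal) := by
      rw [toE_coe', ← EReal.coe_add]
      exact_mod_cast (by ring : r + (lam - (r + lam - z)) = z)
    rw [heq] at this
    exact absurd (lt_of_lt_of_le hz1 this) (lt_irrefl _)

/-- Lemma 4.4 of the paper: if `W ⊆ (ℝmax^n)²` is a closed congruence or a
closed polar cone, then `(f,g) ∈ W` implies `g∖h̄ ≤ f∖h̄` for all `h`. -/
theorem res_ebar_antitone (n : ℕ) (W : Set (RmaxVec n × RmaxVec n))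
    (hclosed : IsClosed W) (hW : IsCongruence W ∨ IsPolarCone W)
    (f g : RmaxVec n) (hfg : (f, g) ∈ W) (h : RmaxVec n) :
    eres (fun i => toE (g i)) (ebar W h) ≤ eres (fun i => toE (f i)) (ebar W h) := by
  have hpre : IsPrecongruence W := by
    rcases hW with h1 | h1
    · exact h1.1
    · exact h1.1
  rw [eres]
  apply sSup_le
  intro lam hlam
  induction lam using EReal.rec with
  | bot => exact bot_le
  | coe r =>
    exact le_sSup (key_lemma hpre hfg h r hlam)
  | top =>
    -- every real is in the g-set, hence in the f-set
    have hreal : ∀ r : ℝ, ∀ i, toE (g i) + (r : EReal) ≤ ebar W h i := by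
      intro r i
      have h1 := hlam i
      rcases eq_bot_or_exists_coe (g i) with hgi | ⟨s, hgi⟩
      · rw [hgi]
        show toE ⊥ + _ ≤ _
        rw [toE_bot', EReal.bot_add]; exact bot_le
      · rw [hgi]; rw [hgi] at h1
        have htop : ebar W h i = ⊤ := by
          have : toE ((s : ℝ) : Rmax) + (⊤ : EReal) = ⊤ := by
            rw [toE_coe']; exact EReal.add_top_of_ne_bot (EReal.coe_ne_bot s)
          rw [this] at h1
          exact top_le_iff.mp h1
        rw [htop]; exact le_top
    by_contra hcon
    push_neg at hcon
    obtain ⟨z, hz1, hz2⟩ := EReal.exists_between_coe_real hcon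
    have : (z : EReal) ≤ sSup {lam : EReal | ∀ i, toE (f i) + lam ≤ ebar W h i} :=
      le_sSup (key_lemma hpre hfg h z (hreal z))
    exact absurd this (not_le.mpr hz1)
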